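/- Let B = (B,+) be an abelian group, C = (C,·) a group, and φ, ψ : C → Aut(B) group homomorphisms (write φ_c, ψ_c for the images of c). Define on B × C the operations (b_1,c_1) + (b_2,c_2) = (b_1 + φ_{c_1}(b_2), c_1c_2) and (φ_{c_1}(b_1), c_1) ∘ (φ_{c_2}(b_2), c_2) = (φ_{c_1c_2}(b_1 + ψ_{c_1}(b_2)), c_1c_2) for all b_1,b_2 ∈ B and c_1,c_2 ∈ C. Then (B × C, +, ∘) is a skew brace if and only if φ_c ψ_{c'} = ψ_{c'} φ_c for all c, c' ∈ C. -/

import Mathlib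

/-- `(A, add, mul)` with the indicated identities and inverse maps is a skew
(left) brace: both operations are group operations and the skew left
distributivity `a ∘ (b + c) = a ∘ b - a + a ∘ c` holds. -/
def IsSkewBrace {A : Type*} (add : A → A → A) (zero : A) (neg : A → A)
    (mul : A → A → A) (one : A) (inv : A → A) : Prop :=
  (∀ a b c : A, add (add a b) c = add a (add b c)) ∧
  (∀ a : A, add zero a = a) ∧ (∀ a : A, add a zero = a) ∧
  (∀ a : A, add (neg a) a = zero) ∧ (∀ a : A, add a (neg a) = zero) ∧
  (∀ a b c : A, mul (mul a b) c = mul a (mul b c)) ∧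
  (∀ a : A, mul one a = a) ∧ (∀ a : A, mul a one = a) ∧
  (∀ a : A, mul (inv a) a = one) ∧ (∀ a : A, mul a (inv a) = one) ∧
  (∀ a b c : A, mul a (add b c) = add (add (mul a b) (neg a)) (mul a c))

/-- The multiplicative group structure on `AddAut M` (composition), as in the older Mathlib. -/
instance addAutGroupOfComp {M : Type*} [Add M] : Group (AddAut M) where
  mul g h := AddEquiv.trans h g
  one := AddEquiv.refl _
  inv := AddEquiv.symm
  mul_assoc _ _ _ := rfl
  one_mul _ := rfl
  mul_one _ := rfl
  inv_mul_cancel := AddEquiv.self_trans_symm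

variable {B C : Type*} [AddCommGroup B] [Group C]

/-- The addition `(b₁,c₁) + (b₂,c₂) = (b₁ + φ_{c₁}(b₂), c₁c₂)` on `B × C`. -/
def sbAdd (φ : C →* AddAut B) : B × C → B × C → B × C :=
  fun p q => (p.1 + φ p.2 q.1, p.2 * q.2)

/-- The multiplication on `B × C` determined by
`(φ_{c₁}(b₁), c₁) ∘ (φ_{c₂}(b₂), c₂) = (φ_{c₁c₂}(b₁ + ψ_{c₁}(b₂)), c₁c₂)`. -/
def sbMul (φ ψ : C →* AddAut B) : B × C → B × C → B × C :=
  fun p q =>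
    (φ (p.2 * q.2) ((φ p.2).symm p.1 + ψ p.2 ((φ q.2).symm q.1)), p.2 * q.2)

lemma symm_eq (φ : C →* AddAut B) (c : C) (b : B) : (φ c).symm b = φ c⁻¹ b := by
  rw [map_inv]; rfl

lemma symm_mul (e₁ e₂ : AddAut B) (b : B) :
    AddEquiv.symm (e₁ * e₂) b = AddEquiv.symm e₂ (AddEquiv.symm e₁ b) := rfl

lemma aut_mul_apply (e₁ e₂ : AddAut B) (b : B) : (e₁ * e₂) b = e₁ (e₂ b) := rfl

lemma aut_one_apply (b : B) : (1 : AddAut B) b = b := rfl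

lemma aut_inv_apply_self (e : AddAut B) (b : B) : e⁻¹ (e b) = b := e.symm_apply_apply b

lemma aut_apply_inv_self (e : AddAut B) (b : B) : e (e⁻¹ b) = b := e.apply_symm_apply b

lemma phi_inv_phi (φ : C →* AddAut B) (x : C) (b : B) : φ x⁻¹ (φ x b) = b := by
  rw [map_inv φ x]; exact (φ x).symm_apply_apply b

lemma phi_phi_inv (φ : C →* AddAut B) (x : C) (b : B) : φ x (φ x⁻¹ b) = b := by
  rw [map_inv φ x]; exact (φ x).apply_symm_apply b

/-- **Theorem 3.2 (first construction)**: `(B × C, +, ∘)` is a skew brace if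
and only if `φ_c ψ_{c'} = ψ_{c'} φ_c` for all `c, c' ∈ C`. -/
theorem first_construction_isSkewBrace_iff (φ ψ : C →* AddAut B) :
    (∃ (zero : B × C) (neg : B × C → B × C) (one : B × C)
        (inv : B × C → B × C),
      IsSkewBrace (sbAdd φ) zero neg (sbMul φ ψ) one inv) ↔
    (∀ (c c' : C) (b : B), φ c (ψ c' b) = ψ c' (φ c b)) := by
  constructor
  · rintro ⟨zero, neg, one, inv, hassoc, hz, hz', hn, hn', hm, ho, ho', hi, hi', hd⟩
    -- zero = (0, 1)
    have hzero : zero = ((0 : B), (1 : C)) := by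
      have h1 := hz ((0 : B), (1 : C))
      have h2 : sbAdd φ zero ((0 : B), (1 : C)) = zero := by
        simp [sbAdd]
      rw [h2] at h1; exact h1
    -- neg (0, s) = (0, s⁻¹)
    have hneg : ∀ s : C, neg ((0 : B), s) = ((0 : B), s⁻¹) := by
      intro s
      have h := hn ((0 : B), s)
      rw [hzero] at h
      simp only [sbAdd, Prod.mk.injEq, map_zero, add_zero] at h
      obtain ⟨h1, h2⟩ := h
      exact Prod.ext h1 (eq_inv_of_mul_eq_one_left h2)
    intro c c' b
    have h := congrArg Prod.fst (hd ((0 : B), c') (φ c b, 1) ((0 : B), c))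
    simp only [sbAdd, sbMul, hneg, symm_eq, map_one, map_zero, map_mul,
      aut_mul_apply, map_inv, aut_inv_apply_self, aut_apply_inv_self,
      zero_add, add_zero, mul_one, one_mul, mul_inv_cancel, inv_one] at h
    -- h should be : φ c' (φ c (ψ c' b)) = φ c' (ψ c' (φ c b)) or similar
    exact (φ c').injective h
  · intro hcomm
    refine ⟨((0 : B), (1 : C)), fun p => (-(φ p.2⁻¹ p.1), p.2⁻¹),
      ((0 : B), (1 : C)),
      fun p => (φ p.2⁻¹ (-(ψ p.2⁻¹ ((φ p.2).symm p.1))), p.2⁻¹), ?_⟩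
    refine ⟨?_, ?_, ?_, ?_, ?_, ?_, ?_, ?_, ?_, ?_, ?_⟩ <;>
      intros <;>
      refine Prod.ext ?_ ?_ <;>
      simp only [sbAdd, sbMul, symm_eq, symm_mul, phi_inv_phi, phi_phi_inv, map_mul,
        map_one, map_zero, map_add, map_neg, aut_mul_apply, aut_one_apply, mul_assoc, mul_one,
        one_mul, inv_mul_cancel, mul_inv_cancel, mul_inv_rev, inv_inv, inv_one,
        add_zero, zero_add, neg_zero, add_assoc, hcomm] <;>
      first
        | rfl
        | abel
        | (group)
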